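/- Let V be a finite-dimensional completely solvable Lie algebra over a field k, i.e. there exists a chain of Lie ideals 0 = h_0 ⊆ h_1 ⊆ ⋯ ⊆ h_n = V of V with dim_k h_i = i for all i. Then every linear functional f ∈ V^* admits a polarization: there exists a Lie subalgebra h ⊆ V such that f(⁅x, y⁆) = 0 for all x, y ∈ h, and h is maximal with respect to inclusion among all linear subspaces W of V satisfying f(⁅x, y⁆) = 0 for all x, y ∈ W. -/

import Mathlib

open Module Submodule

theorem vergne_aux {k V : Type*} [Field k] [LieRing V] [LieAlgebra k V] [FiniteDimensional k V]
    (f : Module.Dual k V) (B : LinearMap.BilinForm k V)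
    (hB : ∀ x y, B x y = f ⁅x, y⁆) (I : ℕ → LieIdeal k V) (hI0 : I 0 = ⊥) :
    ∀ n : ℕ, (∀ i < n, I i ≤ I (i + 1)) →
      (∀ i ≤ n, Module.finrank k ↥(I i : Submodule k V) = i) →
    ∃ h : Submodule k V,
      h ≤ (I n : Submodule k V) ∧
      (∀ x ∈ h, ∀ y ∈ h, B x y = 0) ∧
      (∀ x ∈ h, ∀ (U : LieIdeal k V), I n ≤ U →
        ∀ d ∈ (U : Submodule k V), d ∈ B.orthogonal (U : Submodule k V) → ⁅x, d⁆ ∈ h) ∧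
      (∀ x ∈ h, ∀ y ∈ h, ⁅x, y⁆ ∈ h) ∧
      (∀ v ∈ (I n : Submodule k V), (∀ x ∈ h, B x v = 0) → v ∈ h) := by
  have hskew : ∀ x y, B x y = - B y x := by
    intro x y; rw [hB, hB, ← lie_skew x y, map_neg]
  have hJ : ∀ x y z, B ⁅x, y⁆ z = B x ⁅y, z⁆ - B y ⁅x, z⁆ := by
    intro x y z; rw [hB, hB, hB, lie_lie, map_sub]
  -- key bracket lemma: [rad U₁, rad U₂] ⊆ rad U₁ for U₁ ≤ U₂
  have key : ∀ (U₁ U₂ : LieIdeal k V), (U₁ : Submodule k V) ≤ (U₂ : Submodule k V) →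
      ∀ b, b ∈ (U₁ : Submodule k V) → b ∈ B.orthogonal (U₁ : Submodule k V) →
      ∀ d, d ∈ (U₂ : Submodule k V) → d ∈ B.orthogonal (U₂ : Submodule k V) →
      ⁅b, d⁆ ∈ (U₁ : Submodule k V) ⊓ B.orthogonal (U₁ : Submodule k V) := by
    intro U₁ U₂ hle b hb1 hb2 d hd1 hd2
    constructor
    · exact (LieSubmodule.mem_toSubmodule _).2 (lie_mem_left k V U₁ b d ((LieSubmodule.mem_toSubmodule _).1 hb1))
    · intro z hz
      have h1 : B b ⁅d, z⁆ = 0 := by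
        rw [hskew]
        have : ⁅d, z⁆ ∈ (U₁ : Submodule k V) := (LieSubmodule.mem_toSubmodule _).2 (lie_mem_right k V U₁ d z ((LieSubmodule.mem_toSubmodule _).1 hz))
        rw [hb2 _ this, neg_zero]
      have h2 : B d ⁅b, z⁆ = 0 := by
        rw [hskew]
        have : ⁅b, z⁆ ∈ (U₂ : Submodule k V) := hle ((LieSubmodule.mem_toSubmodule _).2 (lie_mem_left k V U₁ b z ((LieSubmodule.mem_toSubmodule _).1 hb1)))
        rw [hd2 _ this, neg_zero]
      show B z ⁅b, d⁆ = 0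
      rw [hskew, hJ, h1, h2, sub_zero, neg_zero]
  have mo : ∀ {N : Submodule k V} {m : V}, m ∈ B.orthogonal N → ∀ z ∈ N, B z m = 0 :=
    fun hm z hz => hm z hz
  intro n
  induction n with
  | zero =>
    intro _ _
    refine ⟨⊥, bot_le, by simp, by simp, by simp, ?_⟩
    intro v hv _
    rw [hI0] at hv
    simpa using hv
  | succ n ih =>
    intro hmono hdim
    obtain ⟨h, hle, hiso, hQ, hbr, hso⟩ :=
      ih (fun i hi => hmono i (by omega)) (fun i hi => hdim i (by omega))
    have hVle : (I n : Submodule k V) ≤ (I (n+1) : Submodule k V) := by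
      exact_mod_cast hmono n (by omega)
    set Vn1 : Submodule k V := (I (n+1) : Submodule k V) with hVn1
    set r : Submodule k V := Vn1 ⊓ B.orthogonal Vn1 with hr
    refine ⟨h ⊔ r, sup_le (hle.trans hVle) inf_le_left, ?_, ?_, ?_, ?_⟩
    · -- isotropy
      intro x hx y hy
      obtain ⟨a, ha, b, hb, rfl⟩ := Submodule.mem_sup.1 hx
      obtain ⟨c, hc, d, hd, rfl⟩ := Submodule.mem_sup.1 hy
      have hb1 := (Submodule.mem_inf.1 hb).1
      have hb2 := (Submodule.mem_inf.1 hb).2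
      have hd2 := (Submodule.mem_inf.1 hd).2
      have haV : a ∈ Vn1 := hVle (hle ha)
      have hcV : c ∈ Vn1 := hVle (hle hc)
      have e1 : B a c = 0 := hiso a ha c hc
      have e2 : B a d = 0 := (mo hd2) a haV
      have e3 : B b c = 0 := by
        rw [hskew b c, (mo hb2) c hcV, neg_zero]
      have e4 : B b d = 0 := (mo hd2) b hb1
      simp only [map_add, LinearMap.add_apply, e1, e2, e3, e4, add_zero, zero_add]
    · -- Q
      intro x hx U hU d hdU hdO
      obtain ⟨a, ha, b, hb, rfl⟩ := Submodule.mem_sup.1 hx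
      have hb1 := (Submodule.mem_inf.1 hb).1
      have hb2 := (Submodule.mem_inf.1 hb).2
      have hU' : I n ≤ U := (hmono n (by omega)).trans hU
      have h1 : ⁅a, d⁆ ∈ h := hQ a ha U hU' d hdU hdO
      have h2 : ⁅b, d⁆ ∈ r := key (I (n+1)) U
        ((LieSubmodule.toSubmodule_le_toSubmodule _ _).2 hU) b hb1 hb2 d hdU hdO
      rw [add_lie]
      exact Submodule.add_mem _ (Submodule.mem_sup_left h1) (Submodule.mem_sup_right h2)
    · -- bracket closed
      intro x hx y hy
      obtain ⟨a, ha, b, hb, rfl⟩ := Submodule.mem_sup.1 hx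
      obtain ⟨c, hc, d, hd, rfl⟩ := Submodule.mem_sup.1 hy
      have hb1 := (Submodule.mem_inf.1 hb).1
      have hb2 := (Submodule.mem_inf.1 hb).2
      have hd1 := (Submodule.mem_inf.1 hd).1
      have hd2 := (Submodule.mem_inf.1 hd).2
      have t1 : ⁅a, c⁆ ∈ h := hbr a ha c hc
      have t2 : ⁅a, d⁆ ∈ h := hQ a ha (I (n+1)) (hmono n (by omega)) d hd1 hd2
      have t3 : ⁅c, b⁆ ∈ h := hQ c hc (I (n+1)) (hmono n (by omega)) b hb1 hb2
      have t4 : ⁅b, d⁆ ∈ r := key (I (n+1)) (I (n+1)) le_rfl b hb1 hb2 d hd1 hd2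
      have hsplit : ⁅a + b, c + d⁆ = ⁅a, c⁆ + ⁅a, d⁆ + -⁅c, b⁆ + ⁅b, d⁆ := by
        rw [add_lie, lie_add, lie_add, ← lie_skew b c]; abel
      rw [hsplit]
      exact add_mem (add_mem (add_mem (Submodule.mem_sup_left t1) (Submodule.mem_sup_left t2))
        (neg_mem (Submodule.mem_sup_left t3))) (Submodule.mem_sup_right t4)
    · -- self-orthogonality
      intro v hv hvperp
      have hvh : ∀ x ∈ h, B x v = 0 := fun x hx => hvperp x (Submodule.mem_sup_left hx)
      by_cases hrVn : r ≤ (I n : Submodule k V)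
      · -- case B : the radical is contained in the previous term
        have rh : r ≤ h := by
          intro x hxr
          have hx2 := (Submodule.mem_inf.1 hxr).2
          exact hso x (hrVn hxr)
            (fun y hy => (mo hx2) y (hVle (hle hy)))
        by_cases hvVn : v ∈ (I n : Submodule k V)
        · exact Submodule.mem_sup_left (hso v hvVn hvh)
        · exfalso
          have hvnh : v ∉ h := fun hvh' => hvVn (hle hvh')
          -- isotropy of h ⊔ span k {v}
          have hiso2 : ∀ x ∈ h ⊔ span k {v}, ∀ y ∈ h ⊔ span k {v}, B x y = 0 := by
            intro x hx y hy
            obtain ⟨a, ha, z, hz, rfl⟩ := Submodule.mem_sup.1 hx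
            obtain ⟨c, rfl⟩ := Submodule.mem_span_singleton.1 hz
            obtain ⟨a', ha', z', hz', rfl⟩ := Submodule.mem_sup.1 hy
            obtain ⟨c', rfl⟩ := Submodule.mem_span_singleton.1 hz'
            have e1 : B a a' = 0 := hiso a ha a' ha'
            have e2 : B a v = 0 := hvh a ha
            have e3 : B v a' = 0 := by rw [hskew v a', hvh a' ha', neg_zero]
            have e4 : B v v = 0 := by rw [hB]; simp
            simp only [map_add, map_smul, LinearMap.add_apply, LinearMap.smul_apply,
              e1, e2, e3, e4, smul_zero, add_zero, zero_add]
          have hsub1 : h ⊔ span k {v} ≤ Vn1 :=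
            sup_le (hle.trans hVle) ((Submodule.span_singleton_le_iff_mem v _).2 hv)
          -- the restricted forms
          have hCrefl : (B.restrict Vn1).IsRefl := by
            intro x y hxy
            show B (↑y) (↑x) = 0
            rw [hskew]
            rw [show B (↑x) (↑y) = 0 from hxy, neg_zero]
          have hC0refl : (B.restrict (I n : Submodule k V)).IsRefl := by
            intro x y hxy
            show B (↑y) (↑x) = 0
            rw [hskew]
            rw [show B (↑x) (↑y) = 0 from hxy, neg_zero]
          set H' : Submodule k ↥Vn1 := Submodule.comap Vn1.subtype (h ⊔ span k {v}) with hH'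
          set H0 : Submodule k ↥(I n : Submodule k V) :=
            Submodule.comap (I n : Submodule k V).subtype h with hH0
          set rn : Submodule k V := (I n : Submodule k V) ⊓ B.orthogonal (I n : Submodule k V)
            with hrn
          -- stage n+1 inequality
          have F1 := LinearMap.BilinForm.finrank_add_finrank_orthogonal hCrefl H'
          have F2 : finrank k ↥Vn1 = n + 1 := hdim (n+1) (by omega)
          have F3 : finrank k ↥H' ≤ finrank k ↥((B.restrict Vn1).orthogonal H') := by
            apply Submodule.finrank_mono
            intro x hx y hy
            show B (↑y) (↑x) = 0
            exact hiso2 _ (hy : (y : V) ∈ _) _ (hx : (x : V) ∈ _)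
          have F4 : finrank k ↥H' = finrank k ↥(h ⊔ span k {v}) :=
            (Submodule.comapSubtypeEquivOfLe hsub1).finrank_eq
          have F5 : finrank k ↥h < finrank k ↥(h ⊔ span k {v}) := by
            apply Submodule.finrank_lt_finrank_of_lt
            refine lt_of_le_of_ne le_sup_left ?_
            intro hEq
            exact hvnh (hEq ▸ Submodule.mem_sup_right (Submodule.mem_span_singleton_self v))
          have hradsub : (B.restrict Vn1).orthogonal ⊤ = Submodule.comap Vn1.subtype r := by
            ext x
            simp only [LinearMap.BilinForm.mem_orthogonal_iff, Submodule.mem_comap]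
            constructor
            · intro hx
              refine Submodule.mem_inf.2 ⟨x.2, ?_⟩
              intro z hz
              exact hx ⟨z, hz⟩ trivial
            · intro hx y _
              exact (Submodule.mem_inf.1 hx).2 (↑y) y.2
          have F6 : H' ⊓ (B.restrict Vn1).orthogonal ⊤ = (B.restrict Vn1).orthogonal ⊤ := by
            rw [inf_eq_right, hradsub]
            intro x hx
            exact Submodule.mem_comap.2 (Submodule.mem_sup_left (rh (Submodule.mem_comap.1 hx)))
          have F7 : finrank k ↥((B.restrict Vn1).orthogonal ⊤) = finrank k ↥r := by
            rw [hradsub]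
            exact (Submodule.comapSubtypeEquivOfLe inf_le_left).finrank_eq
          have F8 : finrank k ↥r ≤ finrank k ↥rn := by
            apply Submodule.finrank_mono
            intro x hx
            refine Submodule.mem_inf.2 ⟨hrVn hx, ?_⟩
            intro z hz
            exact (mo (Submodule.mem_inf.1 hx).2) z (hVle hz)
          -- stage n identity
          have G1 := LinearMap.BilinForm.finrank_add_finrank_orthogonal hC0refl H0
          have G2 : finrank k ↥(I n : Submodule k V) = n := hdim n (by omega)
          have G3 : (B.restrict (I n : Submodule k V)).orthogonal H0 = H0 := by
            ext x
            simp only [LinearMap.BilinForm.mem_orthogonal_iff, Submodule.mem_comap]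
            constructor
            · intro hx
              apply hso (↑x) x.2
              intro y hy
              exact hx ⟨y, hle hy⟩ (Submodule.mem_comap.2 hy)
            · intro hx y hy
              show B (↑y) (↑x) = 0
              exact hiso _ (Submodule.mem_comap.1 hy) _ hx
          have hrad0 : (B.restrict (I n : Submodule k V)).orthogonal ⊤ =
              Submodule.comap (I n : Submodule k V).subtype rn := by
            ext x
            simp only [LinearMap.BilinForm.mem_orthogonal_iff, Submodule.mem_comap]
            constructor
            · intro hx
              refine Submodule.mem_inf.2 ⟨x.2, ?_⟩
              intro z hz
              exact hx ⟨z, hz⟩ trivial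
            · intro hx y _
              exact (Submodule.mem_inf.1 hx).2 (↑y) y.2
          have G4 : H0 ⊓ (B.restrict (I n : Submodule k V)).orthogonal ⊤ =
              (B.restrict (I n : Submodule k V)).orthogonal ⊤ := by
            rw [inf_eq_right, hrad0]
            intro x hx
            have hx' := Submodule.mem_comap.1 hx
            refine Submodule.mem_comap.2 ?_
            apply hso (↑x) (Submodule.mem_inf.1 hx').1
            intro y hy
            exact (mo (Submodule.mem_inf.1 hx').2) y (hle hy)
          have G5 : finrank k ↥((B.restrict (I n : Submodule k V)).orthogonal ⊤) =
              finrank k ↥rn := by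
            rw [hrad0]
            exact (Submodule.comapSubtypeEquivOfLe inf_le_left).finrank_eq
          have G6 : finrank k ↥H0 = finrank k ↥h :=
            (Submodule.comapSubtypeEquivOfLe hle).finrank_eq
          rw [G3, G4, G5, G6, G2] at G1
          rw [F2, F6, F7] at F1
          omega
      · -- case A : there is a radical vector outside I n
        obtain ⟨e, her, heVn⟩ := SetLike.not_le_iff_exists.1 hrVn
        have he1 := (Submodule.mem_inf.1 her).1
        have he2 := (Submodule.mem_inf.1 her).2
        have hsup : (I n : Submodule k V) ⊔ span k {e} = Vn1 := by
          apply Submodule.eq_of_le_of_finrank_le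
          · exact sup_le hVle ((Submodule.span_singleton_le_iff_mem e _).2 he1)
          · have hlt : (I n : Submodule k V) < (I n : Submodule k V) ⊔ span k {e} := by
              refine lt_of_le_of_ne le_sup_left ?_
              intro hEq
              exact heVn (hEq ▸ Submodule.mem_sup_right (Submodule.mem_span_singleton_self e))
            have h1 := Submodule.finrank_lt_finrank_of_lt hlt
            have h2 : finrank k ↥(I n : Submodule k V) = n := hdim n (by omega)
            have h3 : finrank k ↥Vn1 = n + 1 := hdim (n+1) (by omega)
            omega
        obtain ⟨w, hw, z, hz, hvw⟩ := Submodule.mem_sup.1 (hsup ▸ hv)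
        obtain ⟨c, rfl⟩ := Submodule.mem_span_singleton.1 hz
        have hwperp : ∀ x ∈ h, B x w = 0 := by
          intro x hx
          have h1 : B x (w + c • e) = 0 := hvw ▸ hvh x hx
          have h2 : B x e = 0 := (mo he2) x (hVle (hle hx))
          have h3 : B x (w + c • e) = B x w + c * B x e := by
            simp [map_add, map_smul]
          rw [h3, h2, mul_zero, add_zero] at h1
          exact h1
        have hwh : w ∈ h := hso w hw hwperp
        have hmem : v ∈ h ⊔ span k {e} := by
          rw [← hvw]
          exact Submodule.add_mem _ (Submodule.mem_sup_left hwh)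
            (Submodule.mem_sup_right (Submodule.smul_mem _ c (Submodule.mem_span_singleton_self e)))
        have hfin : h ⊔ span k {e} ≤ h ⊔ r :=
          sup_le_sup_left ((Submodule.span_singleton_le_iff_mem e r).2 her) h
        exact hfin hmem

/-- Vergne's corollary: every linear functional on a finite-dimensional completely
solvable Lie algebra admits a polarization, i.e. a Lie subalgebra on which the
coboundary of `f` vanishes and which is maximal with respect to inclusion among all
linear subspaces with this property. -/
theorem completelySolvable_polarization_exists
    {k V : Type*} [Field k] [LieRing V] [LieAlgebra k V] [FiniteDimensional k V]
    (hcs : ∃ (n : ℕ) (I : ℕ → LieIdeal k V),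
      I 0 = ⊥ ∧ I n = ⊤ ∧ (∀ i < n, I i ≤ I (i + 1)) ∧
      ∀ i ≤ n, Module.finrank k ↥(I i : Submodule k V) = i)
    (f : Module.Dual k V) :
    ∃ h : LieSubalgebra k V,
      (∀ x ∈ h, ∀ y ∈ h, f ⁅x, y⁆ = 0) ∧
      ∀ W : Submodule k V, (∀ x ∈ W, ∀ y ∈ W, f ⁅x, y⁆ = 0) →
        h.toSubmodule ≤ W → W = h.toSubmodule := by
  obtain ⟨n, I, hI0, hIn, hmono, hdim⟩ := hcs
  let B : LinearMap.BilinForm k V := LinearMap.mk₂ k (fun x y => f ⁅x, y⁆)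
    (fun x y z => by simp [add_lie])
    (fun c x y => by simp [smul_lie])
    (fun x y z => by simp [lie_add])
    (fun c x y => by simp [lie_smul])
  have hB : ∀ x y, B x y = f ⁅x, y⁆ := fun _ _ => rfl
  obtain ⟨h, hle, hiso, hQ, hbr, hso⟩ := vergne_aux f B hB I hI0 n hmono hdim
  refine ⟨⟨h, fun {x y} hx hy => hbr x hx y hy⟩, ?_, ?_⟩
  · intro x hx y hy
    exact hiso x hx y hy
  · intro W hW hleW
    refine le_antisymm ?_ hleW
    intro w hw
    have hwtop : w ∈ (I n : Submodule k V) := by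
      rw [hIn]
      exact (LieSubmodule.mem_toSubmodule (⊤ : LieIdeal k V)).2 (LieSubmodule.mem_top w)
    exact hso w hwtop (fun x hx => hW x (hleW hx) w hw)
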